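/- In the regret game, if 1/p ≤ v ≤ (1/p)·(1 + κ·(1−p)), then the profile in which every player chooses safe is a pure strategy Nash equilibrium, and the profile in which every player chooses risky is a pure strategy Nash equilibrium. -/
import Mathlib


namespace RegretGame

/-- An action in the regret game: choose the risky lottery or the safe lottery. -/
inductive Act : Type
  | risky : Act
  | safe : Act
deriving DecidableEq, Repr

/-- `numRisky a i` is the number of players other than `i` choosing the risky lottery
at the action profile `a`. -/
def numRisky {N : ℕ} (a : Fin N → Act) (i : Fin N) : ℕ :=
  (Finset.univ.filter (fun j => j ≠ i ∧ a j = Act.risky)).card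

/-- Player `i`'s expected payoff in the regret game at action profile `a`, given the
success probability `p`, coefficient of regret aversion `κ`, normalized good-state
payoff `v` of the risky lottery, and the information function `q` (the probability of
learning the risky outcome, as a function of how many of the others chose risky). -/
noncomputable def payoff {N : ℕ} (p κ v : ℝ) (q : ℕ → ℝ)
    (a : Fin N → Act) (i : Fin N) : ℝ :=
  if a i = Act.risky then p * v - (1 - p) * κ
  else 1 - p * q (numRisky a i) * κ * (v - 1)

/-- A pure strategy Nash equilibrium of the regret game: no player can strictly
increase her expected payoff by unilaterally changing her own action. -/
def IsNash {N : ℕ} (p κ v : ℝ) (q : ℕ → ℝ) (a : Fin N → Act) : Prop :=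
  ∀ (i : Fin N) (b : Act),
    payoff p κ v q (Function.update a i b) i ≤ payoff p κ v q a i

/-- **Theorem 3, part 3.** If `1/p ≤ v ≤ (1/p)·(1 + κ·(1−p))`, then both the all-safe
profile and the all-risky profile are pure strategy Nash equilibria of the regret
game. -/
theorem regret_game_coordination
    (N : ℕ) (hN : 2 ≤ N) (p κ v : ℝ)
    (hp : 0 < p ∧ p < 1) (hκ : 0 < κ) (hv : 1 < v)
    (q : ℕ → ℝ)
    (hq01 : ∀ m ≤ N - 1, 0 ≤ q m ∧ q m ≤ 1)
    (hq0 : q 0 = 0) (hqN : q (N - 1) = 1)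
    (hqmono : ∀ m₁ m₂, m₁ < m₂ → m₂ ≤ N - 1 → q m₁ < q m₂)
    (hlo : 1 / p ≤ v) (hhi : v ≤ (1 / p) * (1 + κ * (1 - p))) :
    IsNash p κ v q (fun _ : Fin N => Act.safe) ∧
    IsNash p κ v q (fun _ : Fin N => Act.risky) := by
  obtain ⟨hp0, hp1⟩ := hp
  have hpv1 : 1 ≤ p * v := by
    have := (div_le_iff₀ hp0).mp hlo
    linarith
  have hpv2 : p * v ≤ 1 + κ * (1 - p) := by
    have : p * v ≤ p * ((1 / p) * (1 + κ * (1 - p))) := by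
      exact mul_le_mul_of_nonneg_left hhi hp0.le
    have hpne : p ≠ 0 := ne_of_gt hp0
    rw [show p * ((1 / p) * (1 + κ * (1 - p))) = (p / p) * (1 + κ * (1 - p)) by ring,
      div_self hpne, one_mul] at this
    exact this
  constructor
  · intro i b
    cases b with
    | safe =>
      have : Function.update (fun _ : Fin N => Act.safe) i Act.safe
          = (fun _ : Fin N => Act.safe) := by
        funext j; by_cases h : j = i <;> simp [Function.update, h]
      rw [this]
    | risky =>
      have h1 : numRisky (fun _ : Fin N => Act.safe) i = 0 := by
        simp [numRisky]
      have h2 : payoff p κ v q (fun _ : Fin N => Act.safe) i = 1 := by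
        simp [payoff, h1, hq0]
      have h3 : payoff p κ v q (Function.update (fun _ : Fin N => Act.safe) i Act.risky) i
          = p * v - (1 - p) * κ := by
        simp [payoff, Function.update]
      rw [h2, h3]
      nlinarith
  · intro i b
    cases b with
    | risky =>
      have : Function.update (fun _ : Fin N => Act.risky) i Act.risky
          = (fun _ : Fin N => Act.risky) := by
        funext j; by_cases h : j = i <;> simp [Function.update, h]
      rw [this]
    | safe =>
      have h1 : numRisky (Function.update (fun _ : Fin N => Act.risky) i Act.safe) i
          = N - 1 := by
        unfold numRisky
        have : (Finset.univ.filter (fun j =>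
            j ≠ i ∧ Function.update (fun _ : Fin N => Act.risky) i Act.safe j = Act.risky))
            = Finset.univ.erase i := by
          ext j
          by_cases h : j = i <;> simp [Function.update, h]
        rw [this, Finset.card_erase_of_mem (Finset.mem_univ i)]
        simp
      have h2 : payoff p κ v q (Function.update (fun _ : Fin N => Act.risky) i Act.safe) i
          = 1 - p * κ * (v - 1) := by
        simp [payoff, Function.update, h1, hqN]
      have h3 : payoff p κ v q (fun _ : Fin N => Act.risky) i
          = p * v - (1 - p) * κ := by
        simp [payoff]
      rw [h2, h3]
      nlinarith

end RegretGame
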